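/- arXiv:2112.15376 — 2 statements merged into one kernel-verified Lean document; each statement's English description precedes it below -/
import Mathlib

section
/- The class of positive Radon measures μ on ℝⁿ with the property that every Lipschitz function f : ℝⁿ → ℝ can, for every ε > 0, be modified on a set of μ-measure less than ε to agree with a C¹ function, is closed under finite sums: if μ₁ and μ₂ both have this Lusin-type C¹ approximation property, then so does μ₁ + μ₂. -/
open MeasureTheory Metric Set Filter Topology ENNReal

/-- A measure `μ` on `ℝⁿ` has the Lusin-type `C¹` approximation property: every
Lipschitz function can be modified on a set of `μ`-measure `< ε` to a `C¹` function. -/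
def HasLusinC1Property (n : ℕ) (μ : Measure (EuclideanSpace ℝ (Fin n))) : Prop :=
  ∀ f : EuclideanSpace ℝ (Fin n) → ℝ, (∃ C, LipschitzWith C f) →
    ∀ ε : ℝ≥0∞, 0 < ε →
      ∃ g : EuclideanSpace ℝ (Fin n) → ℝ, ContDiff ℝ 1 g ∧ μ {x | g x ≠ f x} < ε

/-- σ-finite inner regularity by closed sets, allowing sets of infinite measure:
any measurable set of a locally finite measure on `ℝⁿ` contains a closed set whose
complement in it has small measure. -/
lemma exists_isClosed_diff_lt_aux (n : ℕ) (μ : Measure (EuclideanSpace ℝ (Fin n)))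
    [IsLocallyFiniteMeasure μ] {A : Set (EuclideanSpace ℝ (Fin n))} (hA : MeasurableSet A)
    {ε : ℝ≥0∞} (hε : ε ≠ 0) :
    ∃ F, F ⊆ A ∧ IsClosed F ∧ μ (A \ F) < ε := by
  obtain ⟨δ, δpos, hδ⟩ := ENNReal.exists_pos_sum_of_countable hε ℕ
  set S : ℕ → Set (EuclideanSpace ℝ (Fin n)) :=
    fun k => A ∩ (closedBall 0 (k + 1) \ ball 0 k) with hS
  have hSmeas : ∀ k, MeasurableSet (S k) := fun k =>
    hA.inter (measurableSet_closedBall.diff measurableSet_ball)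
  have hSfin : ∀ k, μ (S k) ≠ ∞ := by
    intro k
    have : S k ⊆ closedBall 0 (k + 1) := fun x hx => hx.2.1
    exact ((measure_mono this).trans_lt
      (isCompact_closedBall 0 _).measure_lt_top).ne
  have hFk : ∀ k, ∃ F, F ⊆ S k ∧ IsClosed F ∧ μ (S k \ F) < δ k := by
    intro k
    exact (hSmeas k).exists_isClosed_diff_lt (hSfin k)
      (by exact_mod_cast (δpos k).ne')
  choose F hFS hFc hFlt using hFk
  refine ⟨⋃ k, F k, ?_, ?_, ?_⟩
  · exact iUnion_subset fun k => (hFS k).trans inter_subset_left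
  · -- the family is locally finite, so the union is closed
    refine LocallyFinite.isClosed_iUnion ?_ hFc
    intro x
    refine ⟨ball x 1, ball_mem_nhds x one_pos, ?_⟩
    refine Set.Finite.subset (Set.finite_Iio (⌊dist x 0⌋₊ + 2)) ?_
    rintro k ⟨y, hyF, hyb⟩
    have h1 : (k : ℝ) ≤ dist y 0 := by
      have := ((hFS k) hyF).2.2
      simpa [mem_ball] using this
    have h2 : dist y 0 ≤ dist y x + dist x 0 := dist_triangle y x 0
    have h3 : dist y x < 1 := mem_ball.1 hyb
    have h4 : dist x 0 < ⌊dist x 0⌋₊ + 1 := Nat.lt_floor_add_one _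
    have : (k : ℝ) < (⌊dist x 0⌋₊ : ℝ) + 2 := by linarith
    have : k < ⌊dist x 0⌋₊ + 2 := by exact_mod_cast this
    simpa [Set.mem_Iio] using this
  · have hsub : A \ (⋃ k, F k) ⊆ ⋃ k, (S k \ F k) := by
      intro x hx
      have hxA : x ∈ A := hx.1
      set k := ⌊dist x 0⌋₊ with hk
      have hx1 : dist x 0 ≤ (k : ℝ) + 1 := (Nat.lt_floor_add_one _).le
      have hx2 : (k : ℝ) ≤ dist x 0 := Nat.floor_le dist_nonneg
      have hxS : x ∈ S k := by
        refine ⟨hxA, ?_, ?_⟩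
        · simpa [mem_closedBall] using hx1
        · simp only [mem_ball, not_lt]
          exact hx2
      have hxF : x ∉ F k := fun h => hx.2 (Set.mem_iUnion.2 ⟨k, h⟩)
      exact Set.mem_iUnion.2 ⟨k, hxS, hxF⟩
    calc μ (A \ ⋃ k, F k) ≤ μ (⋃ k, (S k \ F k)) := measure_mono hsub
      _ ≤ ∑' k, μ (S k \ F k) := measure_iUnion_le _
      _ ≤ ∑' k, (δ k : ℝ≥0∞) :=
          ENNReal.tsum_le_tsum fun k => (hFlt k).le
      _ < ε := hδ

theorem lusinC1_add (n : ℕ) (μ₁ μ₂ : Measure (EuclideanSpace ℝ (Fin n)))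
    [IsLocallyFiniteMeasure μ₁] [IsLocallyFiniteMeasure μ₂]
    (h₁ : HasLusinC1Property n μ₁) (h₂ : HasLusinC1Property n μ₂) :
    HasLusinC1Property n (μ₁ + μ₂) := by
  intro f hf ε hε
  have hε4 : (0 : ℝ≥0∞) < ε / 4 := ENNReal.div_pos hε.ne' (by norm_num)
  obtain ⟨g₁, hg₁, hμA⟩ := h₁ f hf (ε / 4) hε4
  obtain ⟨g₂, hg₂, hμB⟩ := h₂ f hf (ε / 4) hε4
  have hfc : Continuous f := by
    obtain ⟨C, hC⟩ := hf
    exact hC.continuous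
  set A := {x | g₁ x ≠ f x} with hA
  set B := {x | g₂ x ≠ f x} with hB
  have hAopen : IsOpen A := isOpen_ne_fun hg₁.continuous hfc
  have hBopen : IsOpen B := isOpen_ne_fun hg₂.continuous hfc
  -- closed set F₁ inside B \ A catching μ₁-most of it
  obtain ⟨F₁, hF₁sub, hF₁c, hF₁lt⟩ := exists_isClosed_diff_lt_aux n μ₁
    (hBopen.measurableSet.diff hAopen.measurableSet) hε4.ne'
  -- closed set F₂ inside A \ B catching μ₂-most of it
  obtain ⟨F₂, hF₂sub, hF₂c, hF₂lt⟩ := exists_isClosed_diff_lt_aux n μ₂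
    (hAopen.measurableSet.diff hBopen.measurableSet) hε4.ne'
  have hdisj : Disjoint F₂ F₁ :=
    (disjoint_sdiff_sdiff).mono hF₂sub hF₁sub
  -- smooth Urysohn: φ = 0 on F₂, φ = 1 on F₁
  obtain ⟨φ, hφ0, hφ1, hφmem⟩ :=
    exists_contMDiffMap_zero_one_of_isClosed (modelWithCornersSelf ℝ (EuclideanSpace ℝ (Fin n)))
      hF₂c hF₁c hdisj
  have hφ : ContDiff ℝ 1 (φ : EuclideanSpace ℝ (Fin n) → ℝ) := by
    have := φ.contMDiff
    rw [contMDiff_iff_contDiff] at this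
    exact this.of_le (by exact_mod_cast le_top)
  set g : EuclideanSpace ℝ (Fin n) → ℝ :=
    fun x => φ x * g₁ x + (1 - φ x) * g₂ x with hg
  have hgC1 : ContDiff ℝ 1 g := (hφ.mul hg₁).add ((contDiff_const.sub hφ).mul hg₂)
  refine ⟨g, hgC1, ?_⟩
  set S := {x | g x ≠ f x} with hSdef
  -- outside A ∪ B the function g equals f
  have key : ∀ x ∈ S, x ∈ A ∪ B := by
    intro x hx
    by_contra hxc
    simp only [Set.mem_union, not_or] at hxc
    have hx1 : g₁ x = f x := not_not.1 hxc.1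
    have hx2 : g₂ x = f x := not_not.1 hxc.2
    apply hx
    simp only [hg, hx1, hx2]
    ring
  have hS1 : S ⊆ A ∪ ((B \ A) \ F₁) := by
    intro x hx
    by_cases hxA : x ∈ A
    · exact Or.inl hxA
    have hxB : x ∈ B := (key x hx).resolve_left hxA
    have hxF₁ : x ∉ F₁ := by
      intro hxF
      apply hx
      have hφx : φ x = 1 := hφ1 hxF
      have hx1 : g₁ x = f x := not_not.1 hxA
      simp only [hg, hφx, hx1]
      ring
    exact Or.inr ⟨⟨hxB, hxA⟩, hxF₁⟩
  have hS2 : S ⊆ B ∪ ((A \ B) \ F₂) := by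
    intro x hx
    by_cases hxB : x ∈ B
    · exact Or.inl hxB
    have hxA : x ∈ A := (key x hx).resolve_right hxB
    have hxF₂ : x ∉ F₂ := by
      intro hxF
      apply hx
      have hφx : φ x = 0 := hφ0 hxF
      have hx2 : g₂ x = f x := not_not.1 hxB
      simp only [hg, hφx, hx2]
      ring
    exact Or.inr ⟨⟨hxA, hxB⟩, hxF₂⟩
  have e1 : μ₁ S ≤ μ₁ A + μ₁ ((B \ A) \ F₁) :=
    (measure_mono hS1).trans (measure_union_le _ _)
  have e2 : μ₂ S ≤ μ₂ B + μ₂ ((A \ B) \ F₂) :=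
    (measure_mono hS2).trans (measure_union_le _ _)
  have hfin : (μ₁ + μ₂) S = μ₁ S + μ₂ S := by
    simp [Measure.add_apply]
  rw [hfin]
  calc μ₁ S + μ₂ S ≤ (μ₁ A + μ₁ ((B \ A) \ F₁)) + (μ₂ B + μ₂ ((A \ B) \ F₂)) :=
        add_le_add e1 e2
    _ < (ε / 4 + ε / 4) + (ε / 4 + ε / 4) :=
        ENNReal.add_lt_add (ENNReal.add_lt_add hμA hF₁lt) (ENNReal.add_lt_add hμB hF₂lt)
    _ = 4 * (ε / 4) := by ring
    _ = ε := ENNReal.mul_div_cancel' (by norm_num) (by norm_num)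
end

section
/- Let k ∈ {1,…,n−1}, let V be a k-plane in ℝⁿ with orthonormal basis e_{k+1},…,e_n of its orthogonal complement V^⊥, and let α ∈ (0,1). Then the 2(n−k) one-sided cones C(±e_j, α/(n−k)) for j = k+1,…,n cover ℝⁿ ∖ X(0,V,√(1−α²)). -/
open MeasureTheory Metric Set Filter Topology ENNReal

/-- The one-sided cone `C(e,β) = {v : ⟨v,e⟩ ≥ β|v|}`. -/
def oneSidedCone {n : ℕ} (e : EuclideanSpace ℝ (Fin n)) (β : ℝ) :
    Set (EuclideanSpace ℝ (Fin n)) :=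
  {v | β * ‖v‖ ≤ inner ℝ v e}

set_option maxHeartbeats 1000000 in
theorem cones_cover_complement_of_coneX (n k : ℕ) (hk : 1 ≤ k) (hkn : k < n)
    (V : Submodule ℝ (EuclideanSpace ℝ (Fin n))) (hV : Module.finrank ℝ V = k)
    (e : Fin (n - k) → EuclideanSpace ℝ (Fin n)) (he : Orthonormal ℝ e)
    (heV : ∀ j, e j ∈ Vᗮ) (hspan : Submodule.span ℝ (Set.range e) = Vᗮ)
    (α : ℝ) (hα : α ∈ Set.Ioo (0:ℝ) 1)
    (v : EuclideanSpace ℝ (Fin n))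
    (hv : ¬ (Real.sqrt (1 - α ^ 2) * ‖v‖ ≤
      ‖(Submodule.orthogonalProjection V v : EuclideanSpace ℝ (Fin n))‖)) :
    ∃ (j : Fin (n - k)) (s : ℝ), (s = 1 ∨ s = -1) ∧
      v ∈ oneSidedCone (s • e j) (α / (n - k : ℕ)) := by
  push_neg at hv
  obtain ⟨hα0, hα1⟩ := hα
  have hm1 : 1 ≤ n - k := by omega
  have hmpos : (0:ℝ) < ((n - k : ℕ):ℝ) := by exact_mod_cast hm1
  have h1α : (0:ℝ) ≤ 1 - α ^ 2 := by nlinarith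
  -- the codomain-restricted family
  set e' : Fin (n - k) → Vᗮ := fun j => (⟨e j, heV j⟩ : Vᗮ) with he'def
  have he'on : Orthonormal ℝ e' := he.codRestrict Vᗮ heV
  have hsp' : ⊤ ≤ Submodule.span ℝ (Set.range e') := by
    have hmap : Submodule.map Vᗮ.subtype (Submodule.span ℝ (Set.range e'))
        = Submodule.map Vᗮ.subtype ⊤ := by
      rw [Submodule.map_span, Submodule.map_subtype_top, ← Set.range_comp]
      have hre : (Vᗮ.subtype ∘ e') = e := rfl
      rw [hre, hspan]
    exact (Submodule.map_injective_of_injective Vᗮ.injective_subtype hmap).ge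
  set b : OrthonormalBasis (Fin (n - k)) ℝ Vᗮ := OrthonormalBasis.mk he'on hsp' with hbdef
  have hb : ∀ j, (b j : EuclideanSpace ℝ (Fin n)) = e j := by
    intro j
    rw [hbdef, OrthonormalBasis.coe_mk]
  set P : Vᗮ := Submodule.orthogonalProjection Vᗮ v with hP
  -- Pythagoras
  have hpyth : ‖v‖ ^ 2 = ‖(Submodule.orthogonalProjection V v : EuclideanSpace ℝ (Fin n))‖ ^ 2
      + ‖P‖ ^ 2 := by
    exact Submodule.norm_sq_eq_add_norm_sq_projection v V
  -- Parseval for P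
  have hrepr : ∀ j, b.repr P j = (inner ℝ (e j) v : ℝ) := by
    intro j
    rw [b.repr_apply_apply, hP, Submodule.inner_orthogonalProjection_eq_of_mem_left, hb j]
  have hParseval : ‖P‖ ^ 2 = ∑ j, (inner ℝ (e j) v : ℝ) ^ 2 := by
    rw [← b.repr.norm_map P, EuclideanSpace.norm_eq, Real.sq_sqrt (by positivity)]
    refine Finset.sum_congr rfl fun j _ => ?_
    rw [hrepr j, Real.norm_eq_abs, sq_abs]
  -- lower bound on ‖P‖²
  have hvproj : ‖(Submodule.orthogonalProjection V v : EuclideanSpace ℝ (Fin n))‖ ^ 2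
      < (1 - α ^ 2) * ‖v‖ ^ 2 := by
    have h0 : (0:ℝ) ≤ ‖(Submodule.orthogonalProjection V v : EuclideanSpace ℝ (Fin n))‖ := norm_nonneg _
    nlinarith [Real.sq_sqrt h1α, Real.sqrt_nonneg (1 - α ^ 2), norm_nonneg v]
  have hPbig : α ^ 2 * ‖v‖ ^ 2 < ‖P‖ ^ 2 := by nlinarith
  -- find j with large coefficient
  have hj : ∃ j : Fin (n - k), α ^ 2 * ‖v‖ ^ 2 / (n - k : ℕ) ≤ (inner ℝ (e j) v : ℝ) ^ 2 := by
    by_contra h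
    push_neg at h
    have hsum : ∑ j, (inner ℝ (e j) v : ℝ) ^ 2
        < ∑ _j : Fin (n - k), α ^ 2 * ‖v‖ ^ 2 / (n - k : ℕ) := by
      refine Finset.sum_lt_sum_of_nonempty ?_ fun j _ => h j
      exact Finset.univ_nonempty_iff.mpr (Fin.pos_iff_nonempty.mp (by omega))
    rw [Finset.sum_const, Finset.card_univ, Fintype.card_fin, nsmul_eq_mul] at hsum
    rw [hParseval] at hPbig
    have hcancel : ((n - k : ℕ):ℝ) * (α ^ 2 * ‖v‖ ^ 2 / (n - k : ℕ)) = α ^ 2 * ‖v‖ ^ 2 := by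
      field_simp
    nlinarith
  obtain ⟨j, hj⟩ := hj
  have hkey : α / (n - k : ℕ) * ‖v‖ ≤ |(inner ℝ (e j) v : ℝ)| := by
    have h2 : (α / (n - k : ℕ) * ‖v‖) ^ 2 ≤ (inner ℝ (e j) v : ℝ) ^ 2 := by
      have heq : (α / (n - k : ℕ) * ‖v‖) ^ 2
          = α ^ 2 * ‖v‖ ^ 2 / ((n - k : ℕ):ℝ) ^ 2 := by ring
      rw [heq]
      refine le_trans ?_ hj
      have hm1' : (1:ℝ) ≤ ((n - k : ℕ):ℝ) := by exact_mod_cast hm1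
      have hmm : ((n - k : ℕ):ℝ) ≤ ((n - k : ℕ):ℝ) ^ 2 := by nlinarith
      exact div_le_div_of_nonneg_left (by positivity) hmpos hmm
    calc α / (n - k : ℕ) * ‖v‖
        = Real.sqrt ((α / (n - k : ℕ) * ‖v‖) ^ 2) := (Real.sqrt_sq (by positivity)).symm
      _ ≤ Real.sqrt ((inner ℝ (e j) v : ℝ) ^ 2) := Real.sqrt_le_sqrt h2
      _ = |(inner ℝ (e j) v : ℝ)| := Real.sqrt_sq_eq_abs _
  rw [show (inner ℝ (e j) v : ℝ) = inner ℝ v (e j) from real_inner_comm _ _] at hkey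
  refine ⟨j, if 0 ≤ (inner ℝ v (e j) : ℝ) then 1 else -1, ?_, ?_⟩
  · split <;> simp
  · simp only [oneSidedCone, Set.mem_setOf_eq, inner_smul_right]
    split_ifs with h
    · rw [one_mul]
      exact hkey.trans_eq (abs_of_nonneg h)
    · push_neg at h
      rw [abs_of_neg h] at hkey
      linarith
end
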